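/- Under the LATE model, suppose Y ∈ L¹(P) and g₀(1,X), g₀(0,X) ∈ L¹(P). Then for every θ ∈ ℝ the score is P-integrable and E_P[ψ(W; θ, η₀)] = E_P[g₀(1,X) − g₀(0,X)] − θ · E_P[m₀(1,X) − m₀(0,X)]. Consequently, if κ := E_P[m₀(1,X) − m₀(0,X)] ≠ 0 and θ₀ := E_P[g₀(1,X) − g₀(0,X)] / κ (the LATE), then the moment condition E_P[ψ(W; θ₀, η₀)] = 0 holds. -/

import Mathlib

open MeasureTheory

lemma aux_bound {Ω 𝒳 : Type*} [MeasurableSpace Ω] [MeasurableSpace 𝒳]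
    (P : Measure Ω) [IsProbabilityMeasure P] (X : Ω → 𝒳) (hXm : Measurable X)
    (W : Ω → ℝ) (hWval : ∀ ω, W ω = 0 ∨ W ω = 1)
    (q : 𝒳 → ℝ) (ε : ℝ) (hε : 0 < ε)
    (hq : ∀ᵐ ω ∂P, ε ≤ q (X ω))
    (hqint : Integrable (fun ω => q (X ω)) P)
    (hWq : ∀ A : Set 𝒳, MeasurableSet A →
      ∫ ω in X ⁻¹' A, W ω ∂P = ∫ ω in X ⁻¹' A, q (X ω) ∂P)
    (f : 𝒳 → ℝ) (hfm : Measurable f)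
    (hbd : ∀ᵐ ω ∂P, W ω = 1 → |f (X ω)| ≤ 1) :
    ∀ᵐ ω ∂P, |f (X ω)| ≤ 1 := by
  set A : Set 𝒳 := {x | 1 < |f x|} with hA
  have hAmeas : MeasurableSet A := measurableSet_lt measurable_const hfm.abs
  set S : Set Ω := X ⁻¹' A with hS
  have hSmeas : MeasurableSet S := hXm hAmeas
  have hW0 : ∀ᵐ ω ∂(P.restrict S), W ω = 0 := by
    filter_upwards [ae_restrict_mem hSmeas, ae_restrict_of_ae hbd] with ω hωS hω1
    rcases hWval ω with hw | hw
    · exact hw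
    · exact absurd (hω1 hw) (not_le.mpr hωS)
  have hintSW : ∫ ω in S, W ω ∂P = 0 := by
    rw [integral_congr_ae hW0, integral_zero]
  have hintSq : ∫ ω in S, q (X ω) ∂P = 0 := by
    rw [← hWq A hAmeas]; exact hintSW
  have hge : ε * (P S).toReal ≤ ∫ ω in S, q (X ω) ∂P := by
    have hmono : ∫ ω in S, (ε : ℝ) ∂P ≤ ∫ ω in S, q (X ω) ∂P :=
      integral_mono_ae (integrableOn_const (measure_ne_top _ _))
        hqint.integrableOn (ae_restrict_of_ae hq)
    rwa [setIntegral_const, smul_eq_mul, mul_comm] at hmono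
  have hPS : P S = 0 := by
    rw [hintSq] at hge
    have ht : (P S).toReal = 0 := le_antisymm (by nlinarith) ENNReal.toReal_nonneg
    rcases (ENNReal.toReal_eq_zero_iff _).mp ht with h | h
    · exact h
    · exact absurd h (measure_ne_top _ _)
  have : {ω | ¬ |f (X ω)| ≤ 1} = S := by
    ext ω; simp [hS, hA, not_le]
  rw [ae_iff, this]; exact hPS

/-- Under the LATE model, if `Y ∈ L¹(P)` and `g₀(1,X), g₀(0,X) ∈ L¹(P)`, then
for every `θ ∈ ℝ` the AR-type score `ψ(W; θ, η₀)` is `P`-integrable with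
`E_P[ψ(W; θ, η₀)] = E_P[g₀(1,X) − g₀(0,X)] − θ · E_P[m₀(1,X) − m₀(0,X)]`; consequently,
if `κ := E_P[m₀(1,X) − m₀(0,X)] ≠ 0` and `θ₀ := E_P[g₀(1,X) − g₀(0,X)] / κ` (the LATE),
then the moment condition `E_P[ψ(W; θ₀, η₀)] = 0` holds. -/
theorem stmt0
    {Ω 𝒳 : Type*} [MeasurableSpace Ω] [MeasurableSpace 𝒳]
    (P : Measure Ω) [IsProbabilityMeasure P]
    (Y D Z : Ω → ℝ) (X : Ω → 𝒳)
    (hYm : Measurable Y) (hDm : Measurable D) (hZm : Measurable Z) (hXm : Measurable X)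
    (hDval : ∀ ω, D ω = 0 ∨ D ω = 1) (hZval : ∀ ω, Z ω = 0 ∨ Z ω = 1)
    (g0 m0 : ℝ → 𝒳 → ℝ) (p0 : 𝒳 → ℝ)
    (hg0m : Measurable (Function.uncurry g0)) (hm0m : Measurable (Function.uncurry m0))
    (hp0m : Measurable p0)
    (hp0val : ∀ x, 0 < p0 x ∧ p0 x < 1)
    (ε : ℝ) (hε : ε ∈ Set.Ioo (0 : ℝ) (1 / 2))
    (hp0bd : ∀ᵐ ω ∂P, ε ≤ p0 (X ω) ∧ p0 (X ω) ≤ 1 - ε)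
    -- the true nuisance parameters are the relevant conditional expectations
    (hcY : P[Y | MeasurableSpace.comap (fun ω => (Z ω, X ω)) inferInstance]
        =ᵐ[P] fun ω => g0 (Z ω) (X ω))
    (hcD : P[D | MeasurableSpace.comap (fun ω => (Z ω, X ω)) inferInstance]
        =ᵐ[P] fun ω => m0 (Z ω) (X ω))
    (hcZ : P[Z | MeasurableSpace.comap X inferInstance] =ᵐ[P] fun ω => p0 (X ω))
    -- integrability hypotheses
    (hYint : Integrable Y P)
    (hg1int : Integrable (fun ω => g0 1 (X ω)) P)
    (hg0int : Integrable (fun ω => g0 0 (X ω)) P)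
    -- the AR-type score evaluated at the true nuisance parameter η₀
    (ψ : ℝ → Ω → ℝ)
    (hψ : ∀ θ ω, ψ θ ω =
      g0 1 (X ω) - g0 0 (X ω)
        + Z ω * (Y ω - g0 1 (X ω)) / p0 (X ω)
        - (1 - Z ω) * (Y ω - g0 0 (X ω)) / (1 - p0 (X ω))
        - θ * (m0 1 (X ω) - m0 0 (X ω)
            + Z ω * (D ω - m0 1 (X ω)) / p0 (X ω)
            - (1 - Z ω) * (D ω - m0 0 (X ω)) / (1 - p0 (X ω)))) :
    (∀ θ : ℝ, Integrable (ψ θ) P ∧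
      ∫ ω, ψ θ ω ∂P
        = (∫ ω, (g0 1 (X ω) - g0 0 (X ω)) ∂P)
            - θ * ∫ ω, (m0 1 (X ω) - m0 0 (X ω)) ∂P) ∧
    (∀ κ θ0 : ℝ, κ = ∫ ω, (m0 1 (X ω) - m0 0 (X ω)) ∂P → κ ≠ 0 →
      θ0 = (∫ ω, (g0 1 (X ω) - g0 0 (X ω)) ∂P) / κ →
      ∫ ω, ψ θ0 ω ∂P = 0) := by
  obtain ⟨hε0, hε12⟩ := hε
  have hle : MeasurableSpace.comap (fun ω => (Z ω, X ω)) inferInstance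
      ≤ (inferInstance : MeasurableSpace Ω) := (hZm.prodMk hXm).comap_le
  have hleX : MeasurableSpace.comap X inferInstance
      ≤ (inferInstance : MeasurableSpace Ω) := hXm.comap_le
  -- basic functions
  set G : Ω → ℝ := fun ω => g0 (Z ω) (X ω) with hGdef
  set M : Ω → ℝ := fun ω => m0 (Z ω) (X ω) with hMdef
  set h : Ω → ℝ := fun ω => Z ω / p0 (X ω) - (1 - Z ω) / (1 - p0 (X ω)) with hhdef
  -- measurability
  have hφ : Measurable fun q : ℝ × 𝒳 => q.1 / p0 q.2 - (1 - q.1) / (1 - p0 q.2) :=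
    (measurable_fst.div (hp0m.comp measurable_snd)).sub
      ((measurable_const.sub measurable_fst).div
        (measurable_const.sub (hp0m.comp measurable_snd)))
  have hhsm : StronglyMeasurable[MeasurableSpace.comap (fun ω => (Z ω, X ω)) inferInstance] h :=
    (hφ.comp (comap_measurable _)).stronglyMeasurable
  have hhm : Measurable h := hφ.comp (hZm.prodMk hXm)
  have hGsm : StronglyMeasurable[MeasurableSpace.comap (fun ω => (Z ω, X ω)) inferInstance] G :=
    (hg0m.comp (comap_measurable _)).stronglyMeasurable
  have hMsm : StronglyMeasurable[MeasurableSpace.comap (fun ω => (Z ω, X ω)) inferInstance] M :=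
    (hm0m.comp (comap_measurable _)).stronglyMeasurable
  have hm1m : Measurable fun x => m0 1 x := hm0m.comp (measurable_const.prodMk measurable_id)
  have hm0xm : Measurable fun x => m0 0 x := hm0m.comp (measurable_const.prodMk measurable_id)
  -- bound on h
  have hhbd : ∀ᵐ ω ∂P, ‖h ω‖ ≤ 1 / ε := by
    filter_upwards [hp0bd] with ω hω
    obtain ⟨h1, h2⟩ := hω
    have hp1 : 0 < p0 (X ω) := (hp0val _).1
    have hp2 : p0 (X ω) < 1 := (hp0val _).2
    rw [Real.norm_eq_abs]
    rcases hZval ω with hz | hz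
    · have he : h ω = -(1 / (1 - p0 (X ω))) := by simp [hhdef, hz]
      rw [he, abs_neg, abs_of_nonneg (one_div_nonneg.mpr (by linarith))]
      exact one_div_le_one_div_of_le hε0 (by linarith)
    · have he : h ω = 1 / p0 (X ω) := by simp [hhdef, hz]
      rw [he, abs_of_nonneg (one_div_nonneg.mpr (by linarith))]
      exact one_div_le_one_div_of_le hε0 (by linarith)
  -- integrability of basic pieces
  have hDint : Integrable D P := by
    refine Integrable.mono' (integrable_const 1) hDm.aestronglyMeasurable ?_
    filter_upwards with ω
    rcases hDval ω with hd | hd <;> simp [hd]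
  have hZint : Integrable Z P := by
    refine Integrable.mono' (integrable_const 1) hZm.aestronglyMeasurable ?_
    filter_upwards with ω
    rcases hZval ω with hz | hz <;> simp [hz]
  have hGint : Integrable G P := integrable_condExp.congr hcY
  have hMint : Integrable M P := integrable_condExp.congr hcD
  have hp0Xint : Integrable (fun ω => p0 (X ω)) P := by
    refine Integrable.mono' (integrable_const 1) (hp0m.comp hXm).aestronglyMeasurable ?_
    filter_upwards with ω
    rw [Real.norm_eq_abs, abs_of_nonneg (hp0val _).1.le]
    exact (hp0val _).2.le
  have hYGint : Integrable (Y - G) P := hYint.sub hGint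
  have hDMint : Integrable (D - M) P := hDint.sub hMint
  have hT2int : Integrable (h * (Y - G)) P :=
    hYGint.bdd_mul hhm.aestronglyMeasurable hhbd
  have hT4int : Integrable (h * (D - M)) P :=
    hDMint.bdd_mul hhm.aestronglyMeasurable hhbd
  -- a.e. bounds on M
  have hMbd : ∀ᵐ ω ∂P, 0 ≤ M ω ∧ M ω ≤ 1 := by
    have h0 : (0 : Ω → ℝ) ≤ᵐ[P]
        P[D|MeasurableSpace.comap (fun ω => (Z ω, X ω)) inferInstance] :=
      condExp_nonneg (Filter.Eventually.of_forall fun ω => by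
        rcases hDval ω with hd | hd <;> simp [hd])
    have h1 : P[D|MeasurableSpace.comap (fun ω => (Z ω, X ω)) inferInstance] ≤ᵐ[P]
        P[fun _ => (1 : ℝ)|MeasurableSpace.comap (fun ω => (Z ω, X ω)) inferInstance] :=
      condExp_mono hDint (integrable_const 1)
        (Filter.Eventually.of_forall fun ω => by rcases hDval ω with hd | hd <;> simp [hd])
    have h2 : P[fun _ => (1 : ℝ)|MeasurableSpace.comap (fun ω => (Z ω, X ω)) inferInstance]
        = fun _ => (1 : ℝ) := condExp_const (μ := P) hle (1 : ℝ)
    rw [h2] at h1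
    filter_upwards [h0, h1, hcD] with ω hω0 hω1 hωD
    rw [hωD] at hω0 hω1
    exact ⟨hω0, hω1⟩
  -- set-integral identity for Z vs p0∘X
  have hWq : ∀ A : Set 𝒳, MeasurableSet A →
      ∫ ω in X ⁻¹' A, Z ω ∂P = ∫ ω in X ⁻¹' A, p0 (X ω) ∂P := by
    intro A hAmeas
    have hSm : MeasurableSet[MeasurableSpace.comap X inferInstance] (X ⁻¹' A) :=
      ⟨A, hAmeas, rfl⟩
    rw [← setIntegral_condExp hleX hZint hSm]
    exact setIntegral_congr_ae (hleX _ hSm) (hcZ.mono fun ω hω _ => hω)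
  -- a.e. bounds on m0 1 ∘ X and m0 0 ∘ X
  have hm1bd : ∀ᵐ ω ∂P, |m0 1 (X ω)| ≤ 1 := by
    refine aux_bound P X hXm Z hZval p0 ε hε0 (hp0bd.mono fun ω hω => hω.1) hp0Xint hWq
      (fun x => m0 1 x) hm1m ?_
    filter_upwards [hMbd] with ω hω hz
    have hMe : M ω = m0 1 (X ω) := by rw [hMdef]; simp [hz]
    rw [← hMe, abs_of_nonneg hω.1]
    exact hω.2
  have hm0bd : ∀ᵐ ω ∂P, |m0 0 (X ω)| ≤ 1 := by
    refine aux_bound P X hXm (fun ω => 1 - Z ω)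
      (fun ω => by rcases hZval ω with hz | hz <;> simp [hz])
      (fun x => 1 - p0 x) ε hε0 (hp0bd.mono fun ω hω => show ε ≤ 1 - p0 (X ω) by linarith [hω.2])
      ((integrable_const 1).sub hp0Xint) ?_ (fun x => m0 0 x) hm0xm ?_
    · intro A hAmeas
      rw [integral_sub (integrableOn_const (C := (1 : ℝ)) (measure_ne_top _ _))
          hZint.integrableOn,
        integral_sub (integrableOn_const (C := (1 : ℝ)) (measure_ne_top _ _))
          hp0Xint.integrableOn, hWq A hAmeas]
    · filter_upwards [hMbd] with ω hω hz
      have hz0 : Z ω = 0 := by linarith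
      have hMe : M ω = m0 0 (X ω) := by rw [hMdef]; simp [hz0]
      rw [← hMe, abs_of_nonneg hω.1]
      exact hω.2
  have hm1int : Integrable (fun ω => m0 1 (X ω)) P :=
    Integrable.mono' (integrable_const 1) (hm1m.comp hXm).aestronglyMeasurable
      (hm1bd.mono fun ω hω => by rwa [Real.norm_eq_abs])
  have hm0int : Integrable (fun ω => m0 0 (X ω)) P :=
    Integrable.mono' (integrable_const 1) (hm0xm.comp hXm).aestronglyMeasurable
      (hm0bd.mono fun ω hω => by rwa [Real.norm_eq_abs])
  -- zero-mean facts
  have hcondY : P[Y - G|MeasurableSpace.comap (fun ω => (Z ω, X ω)) inferInstance] =ᵐ[P] 0 := by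
    have h1 := condExp_sub (m := MeasurableSpace.comap (fun ω => (Z ω, X ω)) inferInstance)
      (μ := P) hYint hGint
    have h2 : P[G|MeasurableSpace.comap (fun ω => (Z ω, X ω)) inferInstance] = G :=
      condExp_of_stronglyMeasurable hle hGsm hGint
    refine h1.trans ?_
    rw [h2]
    filter_upwards [hcY] with ω hω
    simp [hω]
  have hcondD : P[D - M|MeasurableSpace.comap (fun ω => (Z ω, X ω)) inferInstance] =ᵐ[P] 0 := by
    have h1 := condExp_sub (m := MeasurableSpace.comap (fun ω => (Z ω, X ω)) inferInstance)
      (μ := P) hDint hMint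
    have h2 : P[M|MeasurableSpace.comap (fun ω => (Z ω, X ω)) inferInstance] = M :=
      condExp_of_stronglyMeasurable hle hMsm hMint
    refine h1.trans ?_
    rw [h2]
    filter_upwards [hcD] with ω hω
    simp [hω]
  have hzeroY : ∫ ω, (h * (Y - G)) ω ∂P = 0 := by
    have hmul := condExp_mul_of_stronglyMeasurable_left hhsm hT2int hYGint
    have hz : P[h * (Y - G)|MeasurableSpace.comap (fun ω => (Z ω, X ω)) inferInstance]
        =ᵐ[P] 0 := by
      refine hmul.trans ?_
      filter_upwards [hcondY] with ω hω
      simp [hω]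
    have hic := integral_condExp (μ := P) hle (f := h * (Y - G))
    rw [← hic, integral_congr_ae hz]
    simp
  have hzeroD : ∫ ω, (h * (D - M)) ω ∂P = 0 := by
    have hmul := condExp_mul_of_stronglyMeasurable_left hhsm hT4int hDMint
    have hz : P[h * (D - M)|MeasurableSpace.comap (fun ω => (Z ω, X ω)) inferInstance]
        =ᵐ[P] 0 := by
      refine hmul.trans ?_
      filter_upwards [hcondD] with ω hω
      simp [hω]
    have hic := integral_condExp (μ := P) hle (f := h * (D - M))
    rw [← hic, integral_congr_ae hz]
    simp
  -- restate in explicit lambda form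
  have hT2int' : Integrable (fun ω => h ω * (Y ω - G ω)) P := hT2int
  have hT4int' : Integrable (fun ω => h ω * (D ω - M ω)) P := hT4int
  have hzeroY' : ∫ ω, h ω * (Y ω - G ω) ∂P = 0 := hzeroY
  have hzeroD' : ∫ ω, h ω * (D ω - M ω) ∂P = 0 := hzeroD
  have hint1 : Integrable (fun ω => g0 1 (X ω) - g0 0 (X ω)) P := hg1int.sub hg0int
  have hint3 : Integrable (fun ω => m0 1 (X ω) - m0 0 (X ω)) P := hm1int.sub hm0int
  -- pointwise decomposition
  have hdecomp : ∀ θ ω, ψ θ ω =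
      (g0 1 (X ω) - g0 0 (X ω)) + h ω * (Y ω - G ω)
        - θ * ((m0 1 (X ω) - m0 0 (X ω)) + h ω * (D ω - M ω)) := by
    intro θ ω
    have hp1 : p0 (X ω) ≠ 0 := ne_of_gt (hp0val _).1
    have hp2 : (1 : ℝ) - p0 (X ω) ≠ 0 := ne_of_gt (by linarith [(hp0val (X ω)).2])
    rw [hψ]
    simp only [hhdef, hGdef, hMdef]
    rcases hZval ω with hz | hz <;> rw [hz] <;> field_simp <;> ring
  -- main claim
  have hmain : ∀ θ : ℝ, Integrable (ψ θ) P ∧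
      ∫ ω, ψ θ ω ∂P
        = (∫ ω, (g0 1 (X ω) - g0 0 (X ω)) ∂P)
            - θ * ∫ ω, (m0 1 (X ω) - m0 0 (X ω)) ∂P := by
    intro θ
    have hintA : Integrable (fun ω => (g0 1 (X ω) - g0 0 (X ω)) + h ω * (Y ω - G ω)) P :=
      hint1.add hT2int'
    have hintB : Integrable (fun ω => (m0 1 (X ω) - m0 0 (X ω)) + h ω * (D ω - M ω)) P :=
      hint3.add hT4int'
    have hintB' : Integrable
        (fun ω => θ * ((m0 1 (X ω) - m0 0 (X ω)) + h ω * (D ω - M ω))) P :=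
      hintB.const_mul θ
    have hint : Integrable (ψ θ) P := by
      refine (hintA.sub hintB').congr ?_
      exact Filter.Eventually.of_forall fun ω => (hdecomp θ ω).symm
    refine ⟨hint, ?_⟩
    calc ∫ ω, ψ θ ω ∂P
        = ∫ ω, ((g0 1 (X ω) - g0 0 (X ω)) + h ω * (Y ω - G ω)
            - θ * ((m0 1 (X ω) - m0 0 (X ω)) + h ω * (D ω - M ω))) ∂P :=
          integral_congr_ae (Filter.Eventually.of_forall fun ω => hdecomp θ ω)
      _ = ((∫ ω, (g0 1 (X ω) - g0 0 (X ω)) ∂P) + ∫ ω, h ω * (Y ω - G ω) ∂P)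
            - θ * ((∫ ω, (m0 1 (X ω) - m0 0 (X ω)) ∂P) + ∫ ω, h ω * (D ω - M ω) ∂P) := by
          rw [integral_sub hintA hintB', integral_add hint1 hT2int', integral_const_mul,
            integral_add hint3 hT4int']
      _ = (∫ ω, (g0 1 (X ω) - g0 0 (X ω)) ∂P)
            - θ * ∫ ω, (m0 1 (X ω) - m0 0 (X ω)) ∂P := by
          rw [hzeroY', hzeroD']; ring
  refine ⟨hmain, ?_⟩
  intro κ θ0 hκdef hκ hθ0
  rw [(hmain θ0).2, hθ0, ← hκdef]
  field_simp
  ring
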